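/- arXiv:1505.00703 — 4 statements merged into one kernel-verified Lean document; each statement's English description precedes it below -/
import Mathlib

section
/- (Lemma 1: minimality of the triangulations D^σ.) For any graph G = (V,E) and any decomposable cover G̃ = (V,Ẽ) of G, there exists an ordering σ of V such that D^σ(E) ⊆ Ẽ. -/
open SimpleGraph

variable {V : Type*}

/-- One step of the elimination/triangulation process: at step `k` (0-based) the vertex with
label `k` is eliminated, and all pairs of its neighbours with larger labels are joined. -/
def triStep {n : ℕ} (σ : V ≃ Fin n) (H : SimpleGraph V) (k : ℕ) : SimpleGraph V where
  Adj u v := H.Adj u v ∨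
    (u ≠ v ∧ ∃ hk : k < n, k < (σ u : ℕ) ∧ k < (σ v : ℕ) ∧
      H.Adj u (σ.symm ⟨k, hk⟩) ∧ H.Adj v (σ.symm ⟨k, hk⟩))
  symm := by
    constructor
    rintro u v (h | ⟨hne, hk, h1, h2, h3, h4⟩)
    · exact Or.inl h.symm
    · exact Or.inr ⟨hne.symm, hk, h2, h1, h4, h3⟩
  loopless := by
    constructor
    rintro u (h | ⟨hne, _⟩)
    · exact H.irrefl h
    · exact hne rfl

/-- The sequence of graphs `E_0, E_1, …` in the triangulation process. -/
def triSeq {n : ℕ} (σ : V ≃ Fin n) (G : SimpleGraph V) : ℕ → SimpleGraph V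
  | 0 => G
  | k + 1 => triStep σ (triSeq σ G k) k

/-- The triangulation `D^σ(G)` of `G` under the ordering `σ` (`p − 2` elimination steps). -/
def triangulation {n : ℕ} (σ : V ≃ Fin n) (G : SimpleGraph V) : SimpleGraph V :=
  triSeq σ G (n - 2)

/-- `σ` is a perfect elimination ordering of `G`: for every `j`, the vertex `σ⁻¹(j)` together
with its higher-labelled neighbours forms a clique. -/
def IsPerfectElimOrdering {n : ℕ} (σ : V ≃ Fin n) (G : SimpleGraph V) : Prop :=
  ∀ j : Fin n,
    G.IsClique ({σ.symm j} ∪ {v : V | (j : ℕ) < (σ v : ℕ) ∧ G.Adj v (σ.symm j)})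

/-- A graph is decomposable (chordal) if it has no induced cycle of length `≥ 4`. -/
def IsDecomposable (G : SimpleGraph V) : Prop :=
  ∀ n : ℕ, 4 ≤ n → IsEmpty (SimpleGraph.cycleGraph n ↪g G)

/-- `σ` is a Generalized Bartlett ordering of `G`: no triangle of `D^σ(G)` consists of three
non-edges of `G`. -/
def IsGBOrdering {n : ℕ} (σ : V ≃ Fin n) (G : SimpleGraph V) : Prop :=
  ¬ ∃ u v w : V,
      ¬ G.Adj u v ∧ ¬ G.Adj v w ∧ ¬ G.Adj u w ∧
      (triangulation σ G).Adj u v ∧ (triangulation σ G).Adj v w ∧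
      (triangulation σ G).Adj u w

/-- `G` is a Generalized Bartlett graph: it admits a Generalized Bartlett ordering. -/
def IsGB (G : SimpleGraph V) : Prop :=
  ∃ (n : ℕ) (σ : V ≃ Fin n), IsGBOrdering σ G


namespace Lem1

variable {G : SimpleGraph V}

variable {V : Type*} {G : SimpleGraph V}

lemma cyc_adj_iff {N iv jv : ℕ} (hij : iv < jv) (hj : jv < N) (i : Fin N) (j : Fin N)
    (hi' : (i : ℕ) = iv) (hj' : (j : ℕ) = jv) :
    (cycleGraph N).Adj i j ↔ (jv = iv + 1 ∨ (iv = 0 ∧ jv = N - 1)) := by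
  rw [cycleGraph_adj']
  have h1 : ((i - j : Fin N) : ℕ) = N - jv + iv := by
    rw [Fin.sub_def]
    simp only [hi', hj']
    exact Nat.mod_eq_of_lt (by omega)
  have h2 : ((j - i : Fin N) : ℕ) = jv - iv := by
    rw [Fin.sub_def]
    simp only [hi', hj']
    have : N - iv + jv = (jv - iv) + N := by omega
    rw [this, Nat.add_mod_right]
    exact Nat.mod_eq_of_lt (by omega)
  rw [h1, h2]
  omega

lemma no_chordless_cycle (hdec : IsDecomposable G) {N : ℕ} (hN : 4 ≤ N) (f : ℕ → V)
    (hinj : ∀ i j, i < j → j < N → f i ≠ f j)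
    (hadj : ∀ i, i + 1 < N → G.Adj (f i) (f (i + 1)))
    (hwrap : G.Adj (f (N - 1)) (f 0))
    (hchord : ∀ i j, i < j → j < N → j ≠ i + 1 → ¬(i = 0 ∧ j = N - 1) →
      ¬ G.Adj (f i) (f j)) : False := by
  have key' : ∀ i j : Fin N, (i : ℕ) < (j : ℕ) →
      (G.Adj (f i) (f j) ↔ (cycleGraph N).Adj i j) := by
    intro i j hij
    rw [cyc_adj_iff hij j.isLt i j rfl rfl]
    constructor
    · intro hA
      by_contra hc
      push_neg at hc
      exact hchord i j hij j.isLt (by omega) (by omega) hA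
    · rintro (h | ⟨h0, h1⟩)
      · have := hadj i (by omega)
        rwa [← h] at this
      · rw [h0, h1]
        exact hwrap.symm
  have key : ∀ i j : Fin N, G.Adj (f i) (f j) ↔ (cycleGraph N).Adj i j := by
    intro i j
    rcases lt_trichotomy (i : ℕ) (j : ℕ) with h | h | h
    · exact key' i j h
    · have : i = j := Fin.ext h
      subst this
      simp
    · rw [adj_comm, (cycleGraph N).adj_comm]
      exact key' j i h
  have hinj' : Function.Injective (fun i : Fin N => f i) := by
    intro i j hij
    by_contra hne
    rcases lt_trichotomy (i : ℕ) (j : ℕ) with h | h | h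
    · exact hinj i j h j.isLt hij
    · exact hne (Fin.ext h)
    · exact hinj j i h i.isLt hij.symm
  exact (hdec N hN).false ⟨⟨fun i => f i, hinj'⟩, fun {i j} => key i j⟩

/-- function-walk of length `n` -/
def FW (G : SimpleGraph V) (c : ℕ → V) (n : ℕ) : Prop :=
  ∀ i, i + 1 ≤ n → G.Adj (c i) (c (i + 1))

/-- connectivity within a vertex set `S` -/
def Conn (G : SimpleGraph V) (S : Set V) (x y : V) : Prop :=
  ∃ n c, FW G c n ∧ c 0 = x ∧ c n = y ∧ ∀ i, i ≤ n → c i ∈ S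

lemma Conn.refl {S : Set V} {x : V} (hx : x ∈ S) : Conn G S x x :=
  ⟨0, fun _ => x, fun i hi => by omega, rfl, rfl, fun i _ => hx⟩

lemma Conn.symm {S : Set V} {x y : V} (h : Conn G S x y) : Conn G S y x := by
  obtain ⟨n, c, hfw, h0, hn, hmem⟩ := h
  refine ⟨n, fun i => c (n - i), fun i hi => ?_, by simp [hn], by simp [h0], fun i hi => hmem _ (by omega)⟩
  dsimp only
  have h1 : n - i = (n - (i + 1)) + 1 := by omega
  rw [h1]
  exact (hfw (n - (i + 1)) (by omega)).symm

lemma Conn.trans {S : Set V} {x y z : V} (h1 : Conn G S x y) (h2 : Conn G S y z) :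
    Conn G S x z := by
  obtain ⟨n, c, hfw, hc0, hcn, hcm⟩ := h1
  obtain ⟨m, d, hfw', hd0, hdm, hdm'⟩ := h2
  have hjoin : ∀ i, n ≤ i → (if i ≤ n then c i else d (i - n)) = d (i - n) := by
    intro i hi
    split_ifs with h
    · have : i = n := by omega
      subst this
      simp [hcn, hd0]
    · rfl
  refine ⟨n + m, fun i => if i ≤ n then c i else d (i - n), fun i hi => ?_, by simp [hc0], ?_, fun i hi => ?_⟩
  · dsimp only
    rcases lt_or_ge i n with h | h
    · rw [if_pos (by omega), if_pos (by omega)]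
      exact hfw i (by omega)
    · rw [hjoin i h, hjoin (i + 1) (by omega)]
      have : i + 1 - n = (i - n) + 1 := by omega
      rw [this]
      exact hfw' (i - n) (by omega)
  · dsimp only
    rw [hjoin (n + m) (by omega)]
    simpa using hdm
  · dsimp only
    rcases le_or_gt i n with h | h
    · rw [if_pos h]; exact hcm i h
    · rw [if_neg (by omega)]; exact hdm' _ (by omega)

lemma Conn.mono {S T : Set V} {x y : V} (hST : S ⊆ T) (h : Conn G S x y) : Conn G T x y := by
  obtain ⟨n, c, hfw, h0, hn, hmem⟩ := h
  exact ⟨n, c, hfw, h0, hn, fun i hi => hST (hmem i hi)⟩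

lemma Conn.single {S : Set V} {x y : V} (h : G.Adj x y) (hx : x ∈ S) (hy : y ∈ S) :
    Conn G S x y := by
  refine ⟨1, fun i => if i = 0 then x else y, fun i hi => ?_, by simp, by simp, fun i hi => ?_⟩
  · have : i = 0 := by omega
    subst this; simpa using h
  · dsimp only
    split_ifs <;> assumption

lemma Conn.step {S : Set V} {x y z : V} (h : Conn G S x y) (hyz : G.Adj y z) (hz : z ∈ S) :
    Conn G S x z := by
  have hy : y ∈ S := by
    obtain ⟨n, c, _, _, hn, hmem⟩ := h
    rw [← hn]; exact hmem n le_rfl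
  exact h.trans (Conn.single hyz hy hz)

lemma Conn.mem_left {S : Set V} {x y : V} (h : Conn G S x y) : x ∈ S := by
  obtain ⟨n, c, _, h0, _, hmem⟩ := h
  rw [← h0]; exact hmem 0 (by omega)

lemma conn_pair_adj {a b : V} (hne : a ≠ b) (h : Conn G {x | x = a ∨ x = b} a b) :
    G.Adj a b := by
  obtain ⟨n, c, hfw, h0, hn, hmem⟩ := h
  induction n using Nat.strong_induction_on generalizing c with
  | _ n ih =>
    rcases Nat.eq_zero_or_pos n with rfl | hpos
    · exact absurd (h0 ▸ hn) hne
    · have h1 := hmem 1 (by omega)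
      rcases h1 with h1 | h1
      · refine ih (n - 1) (by omega) (fun i => c (i + 1)) (fun i hi => ?_) h1 ?_
          (fun i hi => hmem _ (by omega))
        · exact hfw (i + 1) (by omega)
        · rw [← hn]
          congr 1
          omega
      · have := hfw 0 (by omega)
        rwa [h0, h1] at this

/-- the component of `r` in `G - S` -/
def comp (G : SimpleGraph V) (S : Set V) (r : V) : Set V :=
  {v | v ∉ S ∧ Conn G Sᶜ r v}

lemma comp_subset_compl {S : Set V} {r : V} : comp G S r ⊆ Sᶜ := fun _ hv => hv.1

lemma mem_comp_self {S : Set V} {r : V} (hr : r ∉ S) : r ∈ comp G S r :=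
  ⟨hr, Conn.refl hr⟩

lemma comp_closed {S : Set V} {r v u : V} (hv : v ∈ comp G S r) (hadj : G.Adj v u)
    (hu : u ∉ S) : u ∈ comp G S r :=
  ⟨hu, hv.2.step hadj hu⟩

lemma conn_comp_of_mem {S : Set V} {r v : V} (hv : v ∈ comp G S r) :
    Conn G (comp G S r) r v := by
  obtain ⟨hvS, n, c, hfw, h0, hn, hmem⟩ := hv
  refine ⟨n, c, hfw, h0, hn, fun i hi => ⟨hmem i hi, ?_⟩⟩
  exact ⟨i, c, fun t ht => hfw t (by omega), h0, rfl, fun t ht => hmem t (by omega)⟩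

lemma exists_nbr_in_comp [DecidableEq V] {S : Finset V} {r t s : V} (hr : r ∉ S)
    (hsep : ¬ Conn G (↑S : Set V)ᶜ r t) (hs : s ∈ S)
    (hconn : Conn G (↑(S.erase s) : Set V)ᶜ r t) :
    ∃ v, v ∈ comp G (↑S : Set V) r ∧ G.Adj v s := by
  classical
  obtain ⟨n, c, hfw, h0, hn, hmem⟩ := hconn
  have hne : ∀ i, i ≤ n → c i ∉ S → c i ∈ (↑S : Set V)ᶜ := fun i _ h => h
  have hnotS : ∀ i, i ≤ n → c i ∈ S → c i = s := by
    intro i hi hiS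
    have := hmem i hi
    simp only [Set.mem_compl_iff, Finset.coe_erase, Set.mem_diff, not_and,
      Set.mem_singleton_iff, Finset.mem_coe] at this
    exact not_not.mp (this hiS)
  have hhit : ∃ i, i ≤ n ∧ c i = s := by
    by_contra hcon
    push_neg at hcon
    apply hsep
    refine ⟨n, c, hfw, h0, hn, fun i hi => ?_⟩
    intro hiS
    exact hcon i hi (hnotS i hi hiS)
  have hpos : 0 < Nat.find hhit := by
    rcases Nat.eq_zero_or_pos (Nat.find hhit) with h | h
    · exfalso
      apply hr
      have : c (Nat.find hhit) = s := (Nat.find_spec hhit).2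
      rw [h] at this
      rw [h0] at this
      exact this ▸ hs
    · exact h
  have hfle : Nat.find hhit ≤ n := (Nat.find_spec hhit).1
  refine ⟨c (Nat.find hhit - 1), ⟨?_, ?_⟩, ?_⟩
  · intro hcS
    have := hnotS _ (by omega) hcS
    exact Nat.find_min hhit (by omega) ⟨by omega, this⟩
  · refine ⟨Nat.find hhit - 1, c, fun t ht => hfw t (by omega), h0, rfl, fun t ht => ?_⟩
    intro htS
    have := hnotS t (by omega) htS
    exact Nat.find_min hhit (by omega) ⟨by omega, this⟩
  · have := hfw (Nat.find hhit - 1) (by omega)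
    have heq : Nat.find hhit - 1 + 1 = Nat.find hhit := by omega
    rw [heq] at this
    rwa [(Nat.find_spec hhit).2] at this

lemma exists_path_through {T : Set V} {x y v w : V} (hvx : G.Adj v x) (hwy : G.Adj w y)
    (hconn : Conn G T v w) :
    ∃ n c, FW G c n ∧ c 0 = x ∧ c n = y ∧ ∀ i, 0 < i → i < n → c i ∈ T := by
  obtain ⟨m, d, hfw, hd0, hdm, hmem⟩ := hconn
  refine ⟨m + 2, fun t => if t = 0 then x else if t ≤ m + 1 then d (t - 1) else y,
    fun t ht => ?_, by simp, by dsimp only; rw [if_neg (by omega), if_neg (by omega)], fun t ht1 ht2 => ?_⟩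
  · dsimp only
    rcases Nat.eq_zero_or_pos t with rfl | htpos
    · simpa [hd0] using hvx.symm
    · rw [if_neg (by omega)]
      rcases Nat.lt_or_ge t (m + 1) with h | h
      · rw [if_pos (by omega), if_neg (by omega), if_pos (by omega)]
        have he : t + 1 - 1 = (t - 1) + 1 := by omega
        rw [he]
        exact hfw (t - 1) (by omega)
      · have ht1 : t = m + 1 := by omega
        subst ht1
        rw [if_pos le_rfl, if_neg (by omega), if_neg (by omega)]
        simpa [hdm] using hwy
  · dsimp only
    rw [if_neg (by omega), if_pos (by omega)]
    exact hmem (t - 1) (by omega)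

lemma min_path_props {T : Set V} {x y : V} (hxy : x ≠ y) (hnadj : ¬G.Adj x y)
    (hxT : x ∉ T) (hyT : y ∉ T)
    (hex : ∃ n, ∃ c, FW G c n ∧ c 0 = x ∧ c n = y ∧ ∀ i, 0 < i → i < n → c i ∈ T) :
    ∃ k c, FW G c k ∧ c 0 = x ∧ c k = y ∧ 2 ≤ k ∧ (∀ i, 0 < i → i < k → c i ∈ T) ∧
      (∀ i j, i < j → j ≤ k → ¬(i = 0 ∧ j = k) → c i ≠ c j) ∧
      (∀ i j, i + 2 ≤ j → j ≤ k → ¬(i = 0 ∧ j = k) → ¬G.Adj (c i) (c j)) := by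
  classical
  obtain ⟨c, hfw, h0, hky, hint⟩ := Nat.find_spec hex
  set k := Nat.find hex with hkdef
  have hmin : ∀ m, m < k → ¬ (∃ c, FW G c m ∧ c 0 = x ∧ c m = y ∧
      ∀ i, 0 < i → i < m → c i ∈ T) := fun m hm => Nat.find_min hex hm
  have hk2 : 2 ≤ k := by
    by_contra hcon
    push_neg at hcon
    rcases (by omega : k = 0 ∨ k = 1) with h1 | h1
    · apply hxy
      rw [← h0, ← hky, h1]
    · apply hnadj
      have := hfw 0 (by omega)
      rw [h0] at this
      have h2 : c 1 = y := by rw [← hky, h1]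
      rwa [h2] at this
  have hchordless : ∀ i j, i + 2 ≤ j → j ≤ k → ¬(i = 0 ∧ j = k) → ¬G.Adj (c i) (c j) := by
    intro i j hij hjk hnot hA
    apply hmin (i + 1 + (k - j)) (by omega)
    refine ⟨fun t => if t ≤ i then c t else c (j + (t - i - 1)), fun t ht => ?_, ?_, ?_, ?_⟩
    · dsimp only
      rcases Nat.lt_or_ge t i with h | h
      · rw [if_pos (by omega), if_pos (by omega)]
        exact hfw t (by omega)
      · rcases Nat.eq_or_lt_of_le h with h1 | h1
        · rw [if_pos (by omega), if_neg (by omega)]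
          have he : j + (t + 1 - i - 1) = j := by omega
          rw [he, ← h1]
          exact hA
        · rw [if_neg (by omega), if_neg (by omega)]
          have he : j + (t + 1 - i - 1) = (j + (t - i - 1)) + 1 := by omega
          rw [he]
          exact hfw _ (by omega)
    · simp [h0]
    · dsimp only
      rw [if_neg (by omega)]
      have he : j + (i + 1 + (k - j) - i - 1) = k := by omega
      rw [he, hky]
    · intro t ht1 ht2
      dsimp only
      split_ifs with h
      · exact hint t ht1 (by omega)
      · exact hint _ (by omega) (by omega)
  have hinj : ∀ i j, i < j → j ≤ k → ¬(i = 0 ∧ j = k) → c i ≠ c j := by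
    intro i j hij hjk hnot heq
    rcases Nat.eq_or_lt_of_le hjk with hj1 | hj1
    · -- j = k : then c i = y is interior, contradiction
      have hipos : 0 < i := by
        rcases Nat.eq_zero_or_pos i with rfl | h
        · exact absurd ⟨rfl, hj1⟩ hnot
        · exact h
      apply hyT
      have : c i ∈ T := hint i hipos (by omega)
      rwa [heq, hj1, hky] at this
    · rcases Nat.eq_zero_or_pos i with rfl | hipos
      · -- c j = x interior
        apply hxT
        have : c j ∈ T := hint j (by omega) hj1
        rwa [← heq, h0] at this
      · apply hmin (i + (k - j)) (by omega)
        refine ⟨fun t => if t ≤ i then c t else c (j + (t - i)), fun t ht => ?_, ?_, ?_, ?_⟩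
        · dsimp only
          rcases Nat.lt_or_ge t i with h | h
          · rw [if_pos (by omega), if_pos (by omega)]
            exact hfw t (by omega)
          · rcases Nat.eq_or_lt_of_le h with h1 | h1
            · rw [if_pos (by omega), if_neg (by omega)]
              have he : j + (t + 1 - i) = j + 1 := by omega
              rw [he, ← h1, heq]
              exact hfw j (by omega)
            · rw [if_neg (by omega), if_neg (by omega)]
              have he : j + (t + 1 - i) = (j + (t - i)) + 1 := by omega
              rw [he]
              exact hfw _ (by omega)
        · simp [h0]
        · dsimp only
          rw [if_neg (by omega)]
          have he : j + (i + (k - j) - i) = k := by omega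
          rw [he, hky]
        · intro t ht1 ht2
          dsimp only
          split_ifs with h
          · exact hint t ht1 (by omega)
          · exact hint _ (by omega) (by omega)
  exact ⟨k, c, hfw, h0, hky, hk2, hint, hinj, hchordless⟩

lemma minsep_clique [DecidableEq V] (hdec : IsDecomposable G) {a b : V} {S : Finset V}
    (ha : a ∉ S) (hb : b ∉ S)
    (hsep : ¬ Conn G (↑S : Set V)ᶜ a b)
    (hmin : ∀ s ∈ S, Conn G (↑(S.erase s) : Set V)ᶜ a b)
    {x y : V} (hx : x ∈ S) (hy : y ∈ S) (hxy : x ≠ y) : G.Adj x y := by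
  by_contra hnadj
  set A := comp G (↑S : Set V) a with hAdef
  set B := comp G (↑S : Set V) b with hBdef
  have hsep' : ¬ Conn G (↑S : Set V)ᶜ b a := fun h => hsep h.symm
  have hAnS : ∀ v ∈ A, v ∉ S := fun v hv hvS => hv.1 (Finset.mem_coe.mpr hvS)
  have hBnS : ∀ v ∈ B, v ∉ S := fun v hv hvS => hv.1 (Finset.mem_coe.mpr hvS)
  have hAB : ∀ v ∈ A, ∀ u ∈ B, ¬ G.Adj v u ∧ v ≠ u := by
    intro v hv u hu
    constructor
    · intro hadj
      exact hsep ((hv.2.step hadj hu.1).trans hu.2.symm)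
    · rintro rfl
      exact hsep (hv.2.trans hu.2.symm)
  have hxA : x ∉ A := fun h => hAnS x h hx
  have hyA : y ∉ A := fun h => hAnS y h hy
  have hxB : x ∉ B := fun h => hBnS x h hx
  have hyB : y ∉ B := fun h => hBnS y h hy
  obtain ⟨vax, hvax, havx⟩ := exists_nbr_in_comp (G := G) ha hsep hx (hmin x hx)
  obtain ⟨vay, hvay, havy⟩ := exists_nbr_in_comp (G := G) ha hsep hy (hmin y hy)
  obtain ⟨vbx, hvbx, hbvx⟩ := exists_nbr_in_comp (G := G) hb hsep' hx (hmin x hx).symm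
  obtain ⟨vby, hvby, hbvy⟩ := exists_nbr_in_comp (G := G) hb hsep' hy (hmin y hy).symm
  have hconnA : Conn G A vax vay := (conn_comp_of_mem hvax).symm.trans (conn_comp_of_mem hvay)
  have hconnB : Conn G B vbx vby := (conn_comp_of_mem hvbx).symm.trans (conn_comp_of_mem hvby)
  obtain ⟨k, cA, hfwA, hA0, hAk, hk2A, hintA, hinjA, hchA⟩ :=
    min_path_props hxy hnadj hxA hyA (exists_path_through havx havy hconnA)
  obtain ⟨m, cB, hfwB, hB0, hBm, hk2B, hintB, hinjB, hchB⟩ :=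
    min_path_props hxy hnadj hxB hyB (exists_path_through hbvx hbvy hconnB)
  set N := k + m with hNdef
  set f : ℕ → V := fun t => if t ≤ k then cA t else cB (N - t) with hfdef
  have hfle : ∀ t, t ≤ k → f t = cA t := by
    intro t ht
    simp only [hfdef, if_pos ht]
  have hfge : ∀ t, k ≤ t → f t = cB (N - t) := by
    intro t ht
    rcases Nat.eq_or_lt_of_le ht with h | h
    · simp only [hfdef, ← h, if_pos le_rfl]
      have he : N - k = m := by omega
      rw [he, hAk, hBm]
    · simp only [hfdef]
      rw [if_neg (by omega)]
  have hmemf : ∀ t, 0 < t → t < N → t ≠ k → (t < k ∧ f t ∈ A) ∨ (k < t ∧ f t ∈ B) := by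
    intro t ht1 ht2 htk
    rcases Nat.lt_or_ge t k with h | h
    · left
      refine ⟨h, ?_⟩
      rw [hfle t (le_of_lt h)]
      exact hintA t ht1 h
    · right
      have h' : k < t := by omega
      refine ⟨h', ?_⟩
      rw [hfge t (le_of_lt h')]
      exact hintB (N - t) (by omega) (by omega)
  refine no_chordless_cycle hdec (N := N) (by omega) f ?_ ?_ ?_ ?_
  · -- injectivity
    intro i j hij hjN heq
    rcases Nat.lt_or_ge j (k + 1) with hjk | hjk
    · rw [hfle i (by omega), hfle j (by omega)] at heq
      rcases Nat.eq_zero_or_pos i with rfl | hipos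
      · rcases Nat.eq_or_lt_of_le (by omega : j ≤ k) with h | h
        · rw [hA0, h, hAk] at heq
          exact hxy heq
        · exact hinjA 0 j hij (by omega) (by simp; omega) heq
      · exact hinjA i j hij (by omega) (by omega) heq
    · rcases Nat.lt_or_ge i k with hik | hik
      ·
        have hjB : f j ∈ B := by
          rw [hfge j (by omega)]
          exact hintB (N - j) (by omega) (by omega)
        rcases Nat.eq_zero_or_pos i with rfl | hipos
        · rw [hfle 0 (by omega), hA0] at heq
          exact hBnS _ hjB (heq ▸ hx)
        · have hiA : f i ∈ A := by
            rw [hfle i (by omega)]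
            exact hintA i hipos hik
          exact (hAB _ hiA _ hjB).2 heq
      · -- k ≤ i < j
        rw [hfge i hik, hfge j (by omega)] at heq
        refine hinjB (N - j) (N - i) (by omega) (by omega) (by omega) heq.symm
  · -- adjacency
    intro t ht
    rcases Nat.lt_or_ge t k with h | h
    · rw [hfle t (by omega), hfle (t + 1) (by omega)]
      exact hfwA t (by omega)
    · rw [hfge t h, hfge (t + 1) (by omega)]
      have he : N - t = (N - (t + 1)) + 1 := by omega
      rw [he]
      exact (hfwB (N - (t + 1)) (by omega)).symm
  · -- wrap
    rw [hfge (N - 1) (by omega), hfle 0 (by omega), hA0]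
    have he : N - (N - 1) = 1 := by omega
    rw [he]
    have := hfwB 0 (by omega)
    rw [hB0] at this
    exact this.symm
  · -- chords
    intro i j hij hjN hjne hnot hadj
    rcases Nat.lt_or_ge j (k + 1) with hjk | hjk
    · rw [hfle i (by omega), hfle j (by omega)] at hadj
      rcases Nat.eq_zero_or_pos i with rfl | hipos
      · rcases Nat.eq_or_lt_of_le (by omega : j ≤ k) with h | h
        · rw [hA0, h, hAk] at hadj
          exact hnadj hadj
        · exact hchA 0 j (by omega) (by omega) (by simp; omega) hadj
      · exact hchA i j (by omega) (by omega) (by omega) hadj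
    · rcases Nat.lt_or_ge i k with hik | hik
      · have hjB : f j ∈ B := by
          rw [hfge j (by omega)]
          exact hintB (N - j) (by omega) (by omega)
        rcases Nat.eq_zero_or_pos i with rfl | hipos
        · -- x = cB 0 chord in B path
          have hrge : 2 ≤ N - j := by
            have : j ≠ N - 1 := fun h => hnot ⟨rfl, h⟩
            omega
          rw [hfle 0 (by omega), hA0, ← hB0, hfge j (by omega)] at hadj
          exact hchB 0 (N - j) (by omega) (by omega) (by omega) hadj
        · have hiA : f i ∈ A := by
            rw [hfle i (by omega)]
            exact hintA i hipos hik
          exact (hAB _ hiA _ hjB).1 hadj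
      · rw [hfge i hik, hfge j (by omega)] at hadj
        exact hchB (N - j) (N - i) (by omega) (by omega) (by omega) hadj.symm
  
lemma exists_min_sep [Fintype V] [DecidableEq V] {a b : V} (hnadj : ¬G.Adj a b)
    (hne : a ≠ b) :
    ∃ S : Finset V, a ∉ S ∧ b ∉ S ∧ ¬ Conn G (↑S : Set V)ᶜ a b ∧
      ∀ s ∈ S, Conn G (↑(S.erase s) : Set V)ᶜ a b := by
  classical
  set 𝒮 : Set (Finset V) := {S | a ∉ S ∧ b ∉ S ∧ ¬ Conn G (↑S : Set V)ᶜ a b} with h𝒮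
  have h0 : (Finset.univ.erase a).erase b ∈ 𝒮 := by
    refine ⟨by simp [hne], by simp, fun hconn => ?_⟩
    apply hnadj
    apply conn_pair_adj hne
    refine hconn.mono ?_
    intro v hv
    simp only [Set.mem_compl_iff, Finset.coe_erase, Set.mem_diff, Finset.coe_univ,
      Set.mem_singleton_iff, Set.mem_univ, Finset.mem_coe, Finset.mem_erase,
      Finset.mem_univ, and_true, not_and, not_not] at hv
    by_cases hva : v = a
    · exact Or.inl hva
    · exact Or.inr (by tauto)
  obtain ⟨S, hS, hSmin⟩ := Set.exists_min_image 𝒮 Finset.card (Set.toFinite _) ⟨_, h0⟩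
  refine ⟨S, hS.1, hS.2.1, hS.2.2, fun s hs => ?_⟩
  by_contra hcon
  have hmem : S.erase s ∈ 𝒮 :=
    ⟨fun h => hS.1 (Finset.mem_of_mem_erase h), fun h => hS.2.1 (Finset.mem_of_mem_erase h), hcon⟩
  have hle := hSmin _ hmem
  have hlt := Finset.card_erase_lt_of_mem hs
  omega

/-- simplicial vertex -/
def Simp (G : SimpleGraph V) (v : V) : Prop :=
  ∀ u w, G.Adj v u → G.Adj v w → u ≠ w → G.Adj u w

theorem dirac (n : ℕ) : ∀ {V : Type u} [Fintype V] [DecidableEq V] (G : SimpleGraph V),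
    Fintype.card V ≤ n → IsDecomposable G →
    (∀ u v : V, u ≠ v → G.Adj u v) ∨
    (∃ u v, u ≠ v ∧ ¬G.Adj u v ∧ Simp G u ∧ Simp G v) := by
  induction n with
  | zero =>
    intro V _ _ G hcard _
    have : IsEmpty V := Fintype.card_eq_zero_iff.mp (le_antisymm hcard (Nat.zero_le _))
    exact Or.inl fun u => (this.false u).elim
  | succ n ih =>
    intro V _ _ G hcard hdec
    by_cases hcomp : ∀ u v : V, u ≠ v → G.Adj u v
    · exact Or.inl hcomp
    · right
      push_neg at hcomp
      obtain ⟨a, b, hne, hnadj⟩ := hcomp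
      obtain ⟨S, ha, hb, hsep, hmin⟩ := exists_min_sep (G := G) hnadj hne
      have hclique : ∀ x ∈ S, ∀ y ∈ S, x ≠ y → G.Adj x y := fun x hx y hy hxy =>
        minsep_clique hdec ha hb hsep hmin hx hy hxy
      have key : ∀ r t : V, r ∉ S → t ∉ S → ¬ Conn G (↑S : Set V)ᶜ r t →
          ∃ w, w ∈ comp G (↑S : Set V) r ∧ Simp G w := by
        intro r t hr ht hsept
        set C := comp G (↑S : Set V) r with hCdef
        set W : Set V := C ∪ ↑S with hWdef
        letI : DecidablePred (· ∈ W) := Classical.decPred _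
        have htW : t ∉ W := by
          rintro (h | h)
          · exact hsept h.2
          · exact ht h
        have hcardW : Fintype.card ↥W ≤ n := by
          have h2 : Fintype.card ↥W < Fintype.card V :=
            Fintype.card_subtype_lt (p := (· ∈ W)) (x := t) htW
          omega
        have hdec' : IsDecomposable (G.induce W) := fun m hm =>
          ⟨fun e => (hdec m hm).false ((Embedding.induce W).comp e)⟩
        have hnbrW : ∀ v u : V, v ∈ C → G.Adj v u → u ∈ W := by
          intro v u hv hadj
          by_cases huS : u ∈ (↑S : Set V)
          · exact Or.inr huS
          · exact Or.inl (comp_closed hv hadj huS)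
        have hsimp_lift : ∀ p : ↥W, ↑p ∈ C → Simp (G.induce W) p → Simp G ↑p := by
          intro p hp hsimp u w hu hw huw
          have huW : u ∈ W := hnbrW _ _ hp hu
          have hwW : w ∈ W := hnbrW _ _ hp hw
          have := hsimp ⟨u, huW⟩ ⟨w, hwW⟩ (by simpa using hu) (by simpa using hw)
            (by simp [Subtype.ext_iff]; exact huw)
          simpa using this
        rcases ih (G.induce W) hcardW hdec' with hc | ⟨p, q, hpq, hnpq, hsp, hsq⟩
        · -- induced graph complete
          have hrC : r ∈ C := mem_comp_self hr
          refine ⟨r, hrC, hsimp_lift ⟨r, Or.inl hrC⟩ hrC ?_⟩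
          intro u w hu hw huw
          exact hc u w huw
        · -- two nonadjacent simplicial vertices; at most one is in S
          have hnot_both : ¬(↑p ∈ (↑S : Set V) ∧ ↑q ∈ (↑S : Set V)) := by
            rintro ⟨h1, h2⟩
            apply hnpq
            have : G.Adj ↑p ↑q := hclique _ h1 _ h2 (fun h => hpq (Subtype.ext h))
            simpa using this
          rcases p.2 with hpC | hpS
          · exact ⟨↑p, hpC, hsimp_lift p hpC hsp⟩
          · rcases q.2 with hqC | hqS
            · exact ⟨↑q, hqC, hsimp_lift q hqC hsq⟩
            · exact absurd ⟨hpS, hqS⟩ hnot_both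
      obtain ⟨sa, hsaC, hsaS⟩ := key a b ha hb hsep
      obtain ⟨sb, hsbC, hsbS⟩ := key b a hb ha (fun h => hsep h.symm)
      have hd : ¬G.Adj sa sb ∧ sa ≠ sb := by
        constructor
        · intro hadj
          exact hsep ((hsaC.2.step hadj hsbC.1).trans hsbC.2.symm)
        · rintro rfl
          exact hsep (hsaC.2.trans hsbC.2.symm)
      exact ⟨sa, sb, hd.2, hd.1, hsaS, hsbS⟩


lemma exists_peo.{u} (n : ℕ) :
    ∀ {V : Type u} [Fintype V] [DecidableEq V] (G : SimpleGraph V),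
    Fintype.card V = n → IsDecomposable G →
    ∃ σ : V ≃ Fin n, ∀ (j : Fin n) (u w : V), (j : ℕ) < (σ u : ℕ) → (j : ℕ) < (σ w : ℕ) →
      G.Adj u (σ.symm j) → G.Adj w (σ.symm j) → u ≠ w → G.Adj u w := by
  induction n with
  | zero =>
    intro V _ _ G hc _
    exact ⟨Fintype.equivFinOfCardEq hc, fun j => j.elim0⟩
  | succ n ih =>
    intro V _ _ G hc hdec
    have hne : Nonempty V := Fintype.card_pos_iff.mp (by omega)
    obtain ⟨v, hv⟩ : ∃ v, Simp G v := by
      rcases dirac (Fintype.card V) G le_rfl hdec with hcomp | ⟨u, _, _, _, hsu, _⟩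
      · obtain ⟨v⟩ := hne
        exact ⟨v, fun u w hu hw huw => hcomp u w huw⟩
      · exact ⟨u, hsu⟩
    set W : Set V := {u | u ≠ v} with hWdef
    letI : DecidablePred (· ∈ W) := Classical.decPred _
    have hcW : Fintype.card ↥W = n := by
      have h1 : Fintype.card ↥W = Fintype.card V - 1 := by
        simp only [hWdef]
        convert Set.card_ne_eq v
      omega
    have hdec' : IsDecomposable (G.induce W) := fun m hm =>
      ⟨fun e => (hdec m hm).false ((Embedding.induce W).comp e)⟩
    obtain ⟨σ', hσ'⟩ := ih (G.induce W) hcW hdec'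
    refine ⟨⟨fun u => if h : u = v then 0 else (σ' ⟨u, h⟩).succ,
      fun j => Fin.cases v (fun i => (σ'.symm i : V)) j, ?_, ?_⟩, ?_⟩
    · intro u
      by_cases h : u = v
      · simp [h]
      · simp only [dif_neg h]
        rw [Fin.cases_succ]
        simp
    · intro j
      refine Fin.cases ?_ (fun i => ?_) j
      · simp
      · simp only [Fin.cases_succ]
        have hne' : (σ'.symm i : V) ≠ v := (σ'.symm i).2
        refine (dif_neg hne').trans ?_
        have heq : (⟨(σ'.symm i : V), hne'⟩ : ↥W) = σ'.symm i := Subtype.ext rfl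
        rw [heq, Equiv.apply_symm_apply]
    · intro j u w hju hjw hau haw huw
      induction j using Fin.cases with
      | zero =>
        simp only [Equiv.coe_fn_symm_mk, Fin.cases_zero] at hau haw
        exact hv u w hau.symm haw.symm huw
      | succ i =>
        simp only [Equiv.coe_fn_symm_mk, Fin.cases_succ] at hau haw
        have huv : u ≠ v := by
          intro h
          subst h
          simp only [Equiv.coe_fn_mk] at hju
          rw [dif_pos trivial] at hju
          have h0 : ((0 : Fin (n + 1)) : ℕ) = 0 := rfl
          omega
        have hwv : w ≠ v := by
          intro h
          subst h
          simp only [Equiv.coe_fn_mk] at hjw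
          rw [dif_pos trivial] at hjw
          have h0 : ((0 : Fin (n + 1)) : ℕ) = 0 := rfl
          omega
        simp only [Equiv.coe_fn_mk, dif_neg huv, dif_neg hwv, Fin.val_succ] at hju hjw
        have h1 : (i : ℕ) < (σ' ⟨u, huv⟩ : ℕ) := by
          simpa using hju
        have h2 : (i : ℕ) < (σ' ⟨w, hwv⟩ : ℕ) := by
          simpa using hjw
        have h3 : (G.induce W).Adj ⟨u, huv⟩ (σ'.symm i) := by
          simpa using hau
        have h4 : (G.induce W).Adj ⟨w, hwv⟩ (σ'.symm i) := by
          simpa using haw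
        have := hσ' i ⟨u, huv⟩ ⟨w, hwv⟩ h1 h2 h3 h4
          (fun h => huw (congrArg Subtype.val h))
        simpa using this

lemma triStep_mono {n : ℕ} (σ : V ≃ Fin n) {H H' : SimpleGraph V} (h : H ≤ H') (k : ℕ) :
    triStep σ H k ≤ triStep σ H' k := by
  rintro u w (hA | ⟨hne, hk, h1, h2, h3, h4⟩)
  · exact Or.inl (h hA)
  · exact Or.inr ⟨hne, hk, h1, h2, h h3, h h4⟩

lemma triSeq_mono {n : ℕ} (σ : V ≃ Fin n) {G G' : SimpleGraph V} (h : G ≤ G') (k : ℕ) :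
    triSeq σ G k ≤ triSeq σ G' k := by
  induction k with
  | zero => exact h
  | succ k ihk => exact triStep_mono σ ihk k

lemma triSeq_eq_self {n : ℕ} (σ : V ≃ Fin n) {Gt : SimpleGraph V}
    (hpeo : ∀ (j : Fin n) (u w : V), (j : ℕ) < (σ u : ℕ) → (j : ℕ) < (σ w : ℕ) →
      Gt.Adj u (σ.symm j) → Gt.Adj w (σ.symm j) → u ≠ w → Gt.Adj u w) (k : ℕ) :
    triSeq σ Gt k = Gt := by
  induction k with
  | zero => rfl
  | succ k ihk =>
    show triStep σ (triSeq σ Gt k) k = Gt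
    rw [ihk]
    apply le_antisymm
    · rintro u w (hA | ⟨hne, hk, h1, h2, h3, h4⟩)
      · exact hA
      · exact hpeo ⟨k, hk⟩ u w h1 h2 h3 h4 hne
    · intro u w hA
      exact Or.inl hA


end Lem1

/-- Lemma 1: minimality of the triangulations `D^σ`. For any graph `G` and any
decomposable cover `G̃` of `G`, there is an ordering `σ` with `D^σ(E) ⊆ Ẽ`. -/
theorem exists_ordering_triangulation_le_of_decomposable_cover [Fintype V]
    (G Gt : SimpleGraph V) (hcover : G ≤ Gt) (hdec : IsDecomposable Gt) :
    ∃ σ : V ≃ Fin (Fintype.card V), triangulation σ G ≤ Gt := by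
  classical
  obtain ⟨σ, hσ⟩ := Lem1.exists_peo (Fintype.card V) Gt rfl hdec
  refine ⟨σ, ?_⟩
  calc triangulation σ G = triSeq σ G (Fintype.card V - 2) := rfl
    _ ≤ triSeq σ Gt (Fintype.card V - 2) := Lem1.triSeq_mono σ hcover _
    _ = Gt := Lem1.triSeq_eq_self σ hσ _
end

section
/- (Clique sum property.) Let G = (V,E) be a graph whose vertex set decomposes as V = V₁ ∪ V₂ with V₁ ∩ V₂ ≠ ∅, (V₁ \ V₂) ∪ (V₂ \ V₁) ≠ ∅, such that the induced subgraph on V₁ ∩ V₂ is complete and V₁ ∩ V₂ separates V₁ \ V₂ from V₂ \ V₁ (i.e., if u ∈ V₁ \ V₂ and w ∈ V₂ \ V₁ then (u,w) ∉ E). If the induced subgraphs G₁ on V₁ and G₂ on V₂ are both Generalized Bartlett graphs, then G is a Generalized Bartlett graph. -/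
open SimpleGraph

variable {V : Type*}

/-- "No fill" condition for a priority function `f`: the earlier-labelled common neighbour of two
later vertices forces an edge between them. -/
def NoFillOrder (H : SimpleGraph V) (f : V → ℕ) : Prop :=
  ∀ p u v : V, H.Adj u p → H.Adj v p → f p < f u → f p < f v → u ≠ v → H.Adj u v

lemma triSeq_mono_right {n : ℕ} (σ : V ≃ Fin n) (G : SimpleGraph V) {j k : ℕ} (h : j ≤ k) :
    triSeq σ G j ≤ triSeq σ G k := by
  induction k with
  | zero => simp_all
  | succ k ih =>
    rcases Nat.eq_or_lt_of_le h with rfl | h'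
    · exact le_refl _
    · exact le_trans (ih (Nat.lt_succ_iff.mp h')) (fun u v hadj => Or.inl hadj)

lemma le_triSeq {n : ℕ} (σ : V ≃ Fin n) (G : SimpleGraph V) (k : ℕ) :
    G ≤ triSeq σ G k := triSeq_mono_right σ G (Nat.zero_le k)

lemma triSeq_mono_left {n : ℕ} (σ : V ≃ Fin n) {G H : SimpleGraph V} (h : G ≤ H) (k : ℕ) :
    triSeq σ G k ≤ triSeq σ H k := by
  induction k with
  | zero => exact h
  | succ k ih =>
    rintro u v (hadj | ⟨hne, hk, h1, h2, h3, h4⟩)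
    · exact Or.inl (ih hadj)
    · exact Or.inr ⟨hne, hk, h1, h2, ih h3, ih h4⟩

/-- Edges of `triSeq` incident to low-labelled vertices appear early. -/
lemma triSeq_adj_early {n : ℕ} (σ : V ≃ Fin n) (G : SimpleGraph V) {u v : V} {m k : ℕ}
    (hkm : k ≤ m) (hlab : (σ u : ℕ) ≤ k ∨ (σ v : ℕ) ≤ k)
    (h : (triSeq σ G m).Adj u v) : (triSeq σ G k).Adj u v := by
  induction m with
  | zero => exact (Nat.le_zero.mp hkm) ▸ h
  | succ m ih =>
    rcases Nat.eq_or_lt_of_le hkm with rfl | h'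
    · exact h
    · rcases h with hadj | ⟨hne, hk, h1, h2, h3, h4⟩
      · exact ih (Nat.lt_succ_iff.mp h') hadj
      · exfalso
        have hkm' : k ≤ m := Nat.lt_succ_iff.mp h'
        rcases hlab with hl | hl
        · omega
        · omega

/-- If `σ` has no fill for `H` then the triangulation process leaves `H` unchanged. -/
lemma triSeq_eq_of_noFill {n : ℕ} (σ : V ≃ Fin n) (H : SimpleGraph V)
    (hH : NoFillOrder H (fun v => (σ v : ℕ))) (k : ℕ) : triSeq σ H k = H := by
  induction k with
  | zero => rfl
  | succ k ih =>
    have : triSeq σ H (k+1) = triStep σ H k := by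
      show triStep σ (triSeq σ H k) k = triStep σ H k
      rw [ih]
    rw [this]
    ext u v
    constructor
    · rintro (hadj | ⟨hne, hk, h1, h2, h3, h4⟩)
      · exact hadj
      · exact hH (σ.symm ⟨k, hk⟩) u v h3 h4 (by simpa using h1) (by simpa using h2) hne
    · exact fun hadj => Or.inl hadj

lemma triangulation_eq_of_noFill {n : ℕ} (σ : V ≃ Fin n) (H : SimpleGraph V)
    (hH : NoFillOrder H (fun v => (σ v : ℕ))) : triangulation σ H = H :=
  triSeq_eq_of_noFill σ H hH _

/-- The triangulation of any graph admits `σ` as a no-fill (perfect elimination) ordering. -/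
lemma noFill_triangulation {n : ℕ} (σ : V ≃ Fin n) (G : SimpleGraph V) :
    NoFillOrder (triangulation σ G) (fun v => (σ v : ℕ)) := by
  intro p u v hup hvp hpu' hpv' hne
  have hpu : (σ p : ℕ) < (σ u : ℕ) := hpu'
  have hpv : (σ p : ℕ) < (σ v : ℕ) := hpv'
  set k : ℕ := (σ p : ℕ) with hkdef
  have hσu : (σ u : ℕ) < n := (σ u).isLt
  have hσv : (σ v : ℕ) < n := (σ v).isLt
  have hσuv : (σ u : ℕ) ≠ (σ v : ℕ) := fun h => hne (σ.injective (Fin.ext h))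
  have hk1 : k + 1 ≤ n - 2 := by omega
  have hkn : k < n := (σ p).isLt
  have hkle : k ≤ n - 2 := by omega
  have hup' : (triSeq σ G k).Adj u p := triSeq_adj_early σ G hkle (Or.inr le_rfl) hup
  have hvp' : (triSeq σ G k).Adj v p := triSeq_adj_early σ G hkle (Or.inr le_rfl) hvp
  have hpiv : σ.symm ⟨k, hkn⟩ = p := by
    have : (⟨k, hkn⟩ : Fin n) = σ p := Fin.ext rfl
    rw [this, Equiv.symm_apply_apply]
  have hstep : (triSeq σ G (k+1)).Adj u v := by
    show (triStep σ (triSeq σ G k) k).Adj u v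
    exact Or.inr ⟨hne, hkn, hpu, hpv, by rw [hpiv]; exact hup', by rw [hpiv]; exact hvp'⟩
  exact triSeq_mono_right σ G hk1 hstep

/-- From a witness pair `(H, f)` (supergraph with a no-fill priority order whose fill over `G`
contains no triangle), conclude that `G` is a GB graph. -/
lemma isGB_of_witness [Fintype V] (G H : SimpleGraph V) (f : V → ℕ)
    (hGH : G ≤ H) (hf : Function.Injective f) (hPEO : NoFillOrder H f)
    (hTF : ∀ u v w : V, H.Adj u v → H.Adj v w → H.Adj u w →
      G.Adj u v ∨ G.Adj v w ∨ G.Adj u w) : IsGB G := by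
  classical
  letI : LinearOrder V := LinearOrder.lift' f hf
  have hlt : ∀ x y : V, x < y ↔ f x < f y := fun x y => Iff.rfl
  let iso : Fin (Fintype.card V) ≃o V := monoEquivOfFin V rfl
  let σ : V ≃ Fin (Fintype.card V) := iso.symm.toEquiv
  have hσlt : ∀ x y : V, (σ x : ℕ) < (σ y : ℕ) ↔ f x < f y := by
    intro x y
    rw [← hlt]
    constructor
    · intro h
      have : σ x < σ y := h
      simpa [σ] using iso.symm.lt_iff_lt.mp this
    · intro h
      exact iso.symm.lt_iff_lt.mpr h
  have hNF : NoFillOrder H (fun v => (σ v : ℕ)) := by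
    intro p u v hup hvp hpu hpv hne
    exact hPEO p u v hup hvp ((hσlt p u).mp hpu) ((hσlt p v).mp hpv) hne
  have htri : triangulation σ G ≤ H := by
    calc triangulation σ G ≤ triangulation σ H := triSeq_mono_left σ hGH _
    _ = H := triangulation_eq_of_noFill σ H hNF
  refine ⟨Fintype.card V, σ, ?_⟩
  rintro ⟨u, v, w, huv, hvw, huw, d1, d2, d3⟩
  rcases hTF u v w (htri d1) (htri d2) (htri d3) with h | h | h
  · exact huv h
  · exact hvw h
  · exact huw h

/-- Conversely, a GB graph yields such a witness pair. -/
lemma witness_of_isGB (G : SimpleGraph V) (h : IsGB G) :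
    ∃ (H : SimpleGraph V) (f : V → ℕ), Function.Injective f ∧ G ≤ H ∧ NoFillOrder H f ∧
      (∀ u v w : V, H.Adj u v → H.Adj v w → H.Adj u w →
        G.Adj u v ∨ G.Adj v w ∨ G.Adj u w) := by
  obtain ⟨n, σ, hσ⟩ := h
  refine ⟨triangulation σ G, fun v => (σ v : ℕ), ?_, le_triSeq σ G _, noFill_triangulation σ G, ?_⟩
  · intro x y hxy
    exact σ.injective (Fin.ext hxy)
  · intro u v w h1 h2 h3
    by_contra hcon
    push_neg at hcon
    exact hσ ⟨u, v, w, hcon.1, hcon.2.1, hcon.2.2, h1, h2, h3⟩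

/-- Relative no-fill condition on a finite set `W` of vertices. -/
def RelPEO (H : SimpleGraph V) (W : Finset V) (f : V → ℕ) : Prop :=
  ∀ p u v : V, p ∈ W → u ∈ W → v ∈ W → H.Adj u p → H.Adj v p →
    f p < f u → f p < f v → u ≠ v → H.Adj u v

lemma RelPEO.mono {H : SimpleGraph V} {W W' : Finset V} {f : V → ℕ}
    (h : RelPEO H W f) (hW : W' ⊆ W) : RelPEO H W' f :=
  fun p u v hp hu hv => h p u v (hW hp) (hW hu) (hW hv)

/-- Dirac-style lemma: a graph with a (relative) no-fill order on `W` has a vertex outside any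
given clique `S ⊊ W` that is simplicial within `W`. -/
lemma exists_simplicial_outside [DecidableEq V] (H : SimpleGraph V) :
    ∀ (W : Finset V) (f : V → ℕ), Set.InjOn f W → RelPEO H W f →
    ∀ S : Finset V, S ⊆ W → (∀ s t : V, s ∈ S → t ∈ S → s ≠ t → H.Adj s t) →
    (∃ w ∈ W, w ∉ S) →
    ∃ y ∈ W, y ∉ S ∧ ∀ u v : V, u ∈ W → v ∈ W → H.Adj y u → H.Adj y v → u ≠ v → H.Adj u v := by
  intro W
  induction W using Finset.strongInduction with
  | _ W IH =>
    intro f hfinj hrel S hSW hSclique hne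
    classical
    obtain ⟨w₀, hw₀W, hw₀S⟩ := hne
    have hWne : W.Nonempty := ⟨w₀, hw₀W⟩
    obtain ⟨x, hxW, hxmin⟩ := W.exists_min_image f hWne
    -- x is simplicial in W
    have hxsimp : ∀ u v : V, u ∈ W → v ∈ W → H.Adj x u → H.Adj x v → u ≠ v → H.Adj u v := by
      intro u v hu hv hxu hxv huv
      have h1 : f x < f u :=
        lt_of_le_of_ne (hxmin u hu) (fun h => hxu.ne (hfinj hxW hu h))
      have h2 : f x < f v :=
        lt_of_le_of_ne (hxmin v hv) (fun h => hxv.ne (hfinj hxW hv h))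
      exact hrel x u v hxW hu hv hxu.symm hxv.symm h1 h2 huv
    by_cases hxS : x ∈ S
    · by_cases hfull : ∀ z ∈ W, z ≠ x → H.Adj x z
      · -- W ⊆ N[x]: W \ {x} is a clique; any y ∈ W \ S works
        refine ⟨w₀, hw₀W, hw₀S, ?_⟩
        intro u v hu hv hyu hyv huv
        by_cases hux : u = x
        · subst hux
          exact hfull v hv (fun h => huv h.symm)
        · by_cases hvx : v = x
          · subst hvx
            exact (hfull u hu hux).symm
          · exact hxsimp u v hu hv (hfull u hu hux) (hfull v hv hvx) huv
      · push_neg at hfull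
        obtain ⟨z, hzW, hzx, hzadj⟩ := hfull
        have hW'sub : W.erase x ⊂ W := Finset.erase_ssubset hxW
        have hS'cl : ∀ s t : V, s ∈ (W.erase x).filter (fun t => H.Adj x t) →
            t ∈ (W.erase x).filter (fun t => H.Adj x t) → s ≠ t → H.Adj s t := by
          intro s t hs ht hst
          rw [Finset.mem_filter] at hs ht
          exact hxsimp s t (Finset.mem_of_mem_erase hs.1) (Finset.mem_of_mem_erase ht.1)
            hs.2 ht.2 hst
        have hne' : ∃ w ∈ W.erase x, w ∉ (W.erase x).filter (fun t => H.Adj x t) := by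
          refine ⟨z, Finset.mem_erase.mpr ⟨hzx, hzW⟩, ?_⟩
          rw [Finset.mem_filter]
          rintro ⟨-, h⟩
          exact hzadj h
        obtain ⟨y, hyW', hyS', hysimp⟩ := IH (W.erase x) hW'sub f
          (hfinj.mono (by intro a ha; exact Finset.mem_of_mem_erase ha))
          (hrel.mono (Finset.erase_subset _ _)) _ (Finset.filter_subset _ _) hS'cl hne'
        have hyx : y ≠ x := Finset.ne_of_mem_erase hyW'
        have hyNx : ¬ H.Adj x y := fun h => hyS' (Finset.mem_filter.mpr ⟨hyW', h⟩)
        refine ⟨y, Finset.mem_of_mem_erase hyW', ?_, ?_⟩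
        · intro hyS
          exact hyNx (hSclique x y hxS hyS (fun h => hyx h.symm))
        · intro u v hu hv hyu hyv huv
          have hux : u ≠ x := by rintro rfl; exact hyNx hyu.symm
          have hvx : v ≠ x := by rintro rfl; exact hyNx hyv.symm
          exact hysimp u v (Finset.mem_erase.mpr ⟨hux, hu⟩) (Finset.mem_erase.mpr ⟨hvx, hv⟩)
            hyu hyv huv
    · exact ⟨x, hxW, hxS, hxsimp⟩

/-- Normalization: a relative no-fill order on `W` can be chosen so that a clique `S ⊆ W`
occupies the final positions. -/
lemma exists_relPEO_clique_last [DecidableEq V] (H : SimpleGraph V) :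
    ∀ (W : Finset V) (f : V → ℕ), Set.InjOn f W → RelPEO H W f →
    ∀ S : Finset V, S ⊆ W → (∀ s t : V, s ∈ S → t ∈ S → s ≠ t → H.Adj s t) →
    ∃ g : V → ℕ, Set.InjOn g W ∧ RelPEO H W g ∧
      ∀ x ∈ W, x ∉ S → ∀ s ∈ S, g x < g s := by
  intro W
  induction W using Finset.strongInduction with
  | _ W IH =>
    intro f hfinj hrel S hSW hScl
    classical
    by_cases hne : ∃ w ∈ W, w ∉ S
    · obtain ⟨y, hyW, hyS, hysimp⟩ :=
        exists_simplicial_outside H W f hfinj hrel S hSW hScl hne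
      have hW'sub : W.erase y ⊂ W := Finset.erase_ssubset hyW
      obtain ⟨g', hg'inj, hg'rel, hg'last⟩ := IH (W.erase y) hW'sub f
        (hfinj.mono (by intro a ha; exact Finset.mem_of_mem_erase ha))
        (hrel.mono (Finset.erase_subset _ _)) S
        (by intro s hs; exact Finset.mem_erase.mpr ⟨fun h => hyS (h ▸ hs), hSW hs⟩) hScl
      refine ⟨fun v => if v = y then 0 else g' v + 1, ?_, ?_, ?_⟩
      · intro a ha b hb hab
        simp only at hab
        by_cases hay : a = y
        · by_cases hby : b = y
          · rw [hay, hby]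
          · rw [if_pos hay, if_neg hby] at hab
            omega
        · by_cases hby : b = y
          · rw [if_neg hay, if_pos hby] at hab
            omega
          · rw [if_neg hay, if_neg hby] at hab
            exact hg'inj (Finset.mem_erase.mpr ⟨hay, ha⟩) (Finset.mem_erase.mpr ⟨hby, hb⟩)
              (by omega)
      · intro p u v hp hu hv hup hvp hpu hpv huv
        simp only at hpu hpv
        by_cases hpy : p = y
        · have huy : u ≠ y := fun h => hup.ne (h.trans hpy.symm)
          have hvy : v ≠ y := fun h => hvp.ne (h.trans hpy.symm)
          rw [hpy] at hup hvp
          exact hysimp u v hu hv hup.symm hvp.symm huv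
        · rw [if_neg hpy] at hpu hpv
          have huy : u ≠ y := by
            rintro rfl
            rw [if_pos rfl] at hpu
            omega
          have hvy : v ≠ y := by
            rintro rfl
            rw [if_pos rfl] at hpv
            omega
          rw [if_neg huy] at hpu
          rw [if_neg hvy] at hpv
          exact hg'rel p u v (Finset.mem_erase.mpr ⟨hpy, hp⟩) (Finset.mem_erase.mpr ⟨huy, hu⟩)
            (Finset.mem_erase.mpr ⟨hvy, hv⟩) hup hvp (by omega) (by omega) huv
      · intro x hx hxS s hs
        have hsy : s ≠ y := fun h => hyS (h ▸ hs)
        simp only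
        rw [if_neg hsy]
        by_cases hxy : x = y
        · rw [if_pos hxy]
          omega
        · rw [if_neg hxy]
          have : g' x < g' s := hg'last x (Finset.mem_erase.mpr ⟨hxy, hx⟩) hxS s hs
          omega
    · push_neg at hne
      exact ⟨f, hfinj, hrel, fun x hx hxS s _ => absurd (hne x hx) hxS⟩

/-- Spread a graph on a subtype back to the ambient vertex type. -/
def spreadGraph (W : Set V) (H' : SimpleGraph ↥W) : SimpleGraph V where
  Adj u v := ∃ (hu : u ∈ W) (hv : v ∈ W), H'.Adj ⟨u, hu⟩ ⟨v, hv⟩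
  symm := by
    constructor
    rintro u v ⟨hu, hv, h⟩
    exact ⟨hv, hu, h.symm⟩
  loopless := by
    constructor
    rintro u ⟨hu, hv, h⟩
    exact H'.irrefl h

/-- Extract ambient-type witness data from `IsGB (G.induce W)`. -/
lemma side_data (G : SimpleGraph V) (W : Set V) (h : IsGB (G.induce W)) :
    ∃ (K : SimpleGraph V) (f : V → ℕ),
      (∀ u v : V, K.Adj u v → u ∈ W ∧ v ∈ W) ∧
      (∀ u v : V, u ∈ W → v ∈ W → G.Adj u v → K.Adj u v) ∧
      Set.InjOn f W ∧
      (∀ p u v : V, K.Adj u p → K.Adj v p → f p < f u → f p < f v → u ≠ v → K.Adj u v) ∧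
      (∀ u v w : V, K.Adj u v → K.Adj v w → K.Adj u w →
        G.Adj u v ∨ G.Adj v w ∨ G.Adj u w) := by
  classical
  obtain ⟨H', f', hfinj', hle', hNF', hTF'⟩ := witness_of_isGB _ h
  refine ⟨spreadGraph W H', fun v => if h : v ∈ W then f' ⟨v, h⟩ else 0, ?_, ?_, ?_, ?_, ?_⟩
  · rintro u v ⟨hu, hv, -⟩
    exact ⟨hu, hv⟩
  · intro u v hu hv hadj
    exact ⟨hu, hv, hle' hadj⟩
  · intro a ha b hb hab
    simp only at hab
    rw [dif_pos ha, dif_pos hb] at hab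
    have := hfinj' hab
    exact congrArg Subtype.val this
  · rintro p u v ⟨hu, hp, h1⟩ ⟨hv, hp', h2⟩ hpu hpv huv
    simp only at hpu hpv
    rw [dif_pos hp, dif_pos hu] at hpu
    rw [dif_pos hp', dif_pos hv] at hpv
    have h2' : H'.Adj ⟨v, hv⟩ ⟨p, hp⟩ := h2
    have hpv' : f' ⟨p, hp⟩ < f' ⟨v, hv⟩ := hpv
    have hne : (⟨u, hu⟩ : ↥W) ≠ ⟨v, hv⟩ := fun h => huv (congrArg Subtype.val h)
    exact ⟨hu, hv, hNF' ⟨p, hp⟩ ⟨u, hu⟩ ⟨v, hv⟩ h1 h2' hpu hpv' hne⟩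
  · rintro u v w ⟨hu, hv, h1⟩ ⟨hv', hw, h2⟩ ⟨hu', hw', h3⟩
    have h2' : H'.Adj ⟨v, hv⟩ ⟨w, hw⟩ := h2
    have h3' : H'.Adj ⟨u, hu⟩ ⟨w, hw⟩ := h3
    rcases hTF' ⟨u, hu⟩ ⟨v, hv⟩ ⟨w, hw⟩ h1 h2' h3' with hh | hh | hh
    · exact Or.inl hh
    · exact Or.inr (Or.inl hh)
    · exact Or.inr (Or.inr hh)

theorem isGB_of_cliqueSum' [Fintype V] (G : SimpleGraph V) (V₁ V₂ : Set V)
    (hunion : V₁ ∪ V₂ = Set.univ)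
    (hcomplete : G.IsClique (V₁ ∩ V₂))
    (hsep : ∀ u ∈ V₁ \ V₂, ∀ w ∈ V₂ \ V₁, ¬ G.Adj u w)
    (h₁ : IsGB (G.induce V₁)) (h₂ : IsGB (G.induce V₂)) :
    IsGB G := by
  classical
  have hV2of : ∀ x : V, x ∉ V₁ → x ∈ V₂ := by
    intro x hx
    have : x ∈ V₁ ∪ V₂ := by rw [hunion]; trivial
    exact this.resolve_left hx
  obtain ⟨K₁, f₁, hK₁supp, hK₁le, hf₁inj, hf₁rel, hK₁TF⟩ := side_data G V₁ h₁
  obtain ⟨K₂, f₂, hK₂supp, hK₂le, hf₂inj, hf₂rel, hK₂TF⟩ := side_data G V₂ h₂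
  -- normalize orders so that the separator S = V₁ ∩ V₂ is last on each side
  have hScl₁ : ∀ s t : V, s ∈ (V₁ ∩ V₂).toFinset → t ∈ (V₁ ∩ V₂).toFinset → s ≠ t →
      K₁.Adj s t := by
    intro s t hs ht hst
    rw [Set.mem_toFinset] at hs ht
    exact hK₁le s t hs.1 ht.1 (hcomplete hs ht hst)
  have hScl₂ : ∀ s t : V, s ∈ (V₁ ∩ V₂).toFinset → t ∈ (V₁ ∩ V₂).toFinset → s ≠ t →
      K₂.Adj s t := by
    intro s t hs ht hst
    rw [Set.mem_toFinset] at hs ht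
    exact hK₂le s t hs.2 ht.2 (hcomplete hs ht hst)
  have hrel₁ : RelPEO K₁ V₁.toFinset f₁ := by
    intro p u v _ _ _ h1 h2 h3 h4 h5
    exact hf₁rel p u v h1 h2 h3 h4 h5
  have hrel₂ : RelPEO K₂ V₂.toFinset f₂ := by
    intro p u v _ _ _ h1 h2 h3 h4 h5
    exact hf₂rel p u v h1 h2 h3 h4 h5
  obtain ⟨g₁, hg₁inj, hg₁rel, hg₁last⟩ := exists_relPEO_clique_last K₁ V₁.toFinset f₁
    (by rwa [Set.coe_toFinset]) hrel₁ (V₁ ∩ V₂).toFinset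
    (by intro s hs; rw [Set.mem_toFinset] at hs ⊢; exact hs.1) hScl₁
  obtain ⟨g₂, hg₂inj, hg₂rel, hg₂last⟩ := exists_relPEO_clique_last K₂ V₂.toFinset f₂
    (by rwa [Set.coe_toFinset]) hrel₂ (V₁ ∩ V₂).toFinset
    (by intro s hs; rw [Set.mem_toFinset] at hs ⊢; exact hs.2) hScl₂
  have hg₁inj' : Set.InjOn g₁ V₁ := by rwa [Set.coe_toFinset] at hg₁inj
  have hg₂inj' : Set.InjOn g₂ V₂ := by rwa [Set.coe_toFinset] at hg₂inj
  set N : ℕ := (Finset.univ.sup g₁) + (Finset.univ.sup g₂) + 1 with hN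
  have hN₁ : ∀ x : V, g₁ x < N := by
    intro x
    have := Finset.le_sup (f := g₁) (Finset.mem_univ x)
    omega
  have hN₂ : ∀ x : V, g₂ x < N := by
    intro x
    have := Finset.le_sup (f := g₂) (Finset.mem_univ x)
    omega
  set f : V → ℕ := fun v =>
    if v ∈ V₁ then (if v ∈ V₂ then 2*N + g₂ v else g₁ v) else N + g₂ v with hf
  have hfA : ∀ x : V, x ∈ V₁ → x ∉ V₂ → f x = g₁ x := by
    intro x h1 h2; simp [hf, h1, h2]
  have hfB : ∀ x : V, x ∉ V₁ → f x = N + g₂ x := by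
    intro x h1; simp [hf, h1]
  have hfS : ∀ x : V, x ∈ V₁ → x ∈ V₂ → f x = 2*N + g₂ x := by
    intro x h1 h2; simp [hf, h1, h2]
  set H : SimpleGraph V := K₁ ⊔ K₂ with hH
  -- helper: last-position facts
  have hlast₁ : ∀ p u : V, p ∈ V₁ → p ∉ V₂ → u ∈ V₁ → u ∈ V₂ → g₁ p < g₁ u := by
    intro p u hp1 hp2 hu1 hu2
    refine hg₁last p (Set.mem_toFinset.mpr hp1) ?_ u (Set.mem_toFinset.mpr ⟨hu1, hu2⟩)
    rw [Set.mem_toFinset]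
    exact fun hh => hp2 hh.2
  have hlast₂ : ∀ p u : V, p ∈ V₂ → p ∉ V₁ → u ∈ V₁ → u ∈ V₂ → g₂ p < g₂ u := by
    intro p u hp2 hp1 hu1 hu2
    refine hg₂last p (Set.mem_toFinset.mpr hp2) ?_ u (Set.mem_toFinset.mpr ⟨hu1, hu2⟩)
    rw [Set.mem_toFinset]
    exact fun hh => hp1 hh.1
  apply isGB_of_witness G H f
  · -- G ≤ H
    intro u v hadj
    by_cases hu1 : u ∈ V₁
    · by_cases hv1 : v ∈ V₁
      · exact Or.inl (hK₁le u v hu1 hv1 hadj)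
      · have hv2 : v ∈ V₂ := hV2of v hv1
        by_cases hu2 : u ∈ V₂
        · exact Or.inr (hK₂le u v hu2 hv2 hadj)
        · exact absurd hadj (hsep u ⟨hu1, hu2⟩ v ⟨hv2, hv1⟩)
    · have hu2 : u ∈ V₂ := hV2of u hu1
      by_cases hv2 : v ∈ V₂
      · exact Or.inr (hK₂le u v hu2 hv2 hadj)
      · have hv1 : v ∈ V₁ := by
          by_contra hcon
          exact hv2 (hV2of v hcon)
        exact absurd hadj.symm (hsep v ⟨hv1, hv2⟩ u ⟨hu2, hu1⟩)
  · -- injectivity of f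
    intro a b hab
    by_cases ha1 : a ∈ V₁ <;> by_cases ha2 : a ∈ V₂ <;>
      by_cases hb1 : b ∈ V₁ <;> by_cases hb2 : b ∈ V₂
    all_goals {
      first
      | (exact hg₂inj' ha2 hb2 (by
          have h1 := hfS a ha1 ha2; have h2 := hfS b hb1 hb2; omega))
      | (exact hg₁inj' ha1 hb1 (by
          have h1 := hfA a ha1 ha2; have h2 := hfA b hb1 hb2; omega))
      | (exact hg₂inj' (hV2of a ha1) (hV2of b hb1) (by
          have h1 := hfB a ha1; have h2 := hfB b hb1; omega))
      | (exfalso; first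
          | (have h1 := hfS a ha1 ha2; have h2 := hfA b hb1 hb2
             have := hN₁ b; have := hN₂ a; omega)
          | (have h1 := hfS a ha1 ha2; have h2 := hfB b hb1
             have := hN₂ b; have := hN₂ a; omega)
          | (have h1 := hfA a ha1 ha2; have h2 := hfS b hb1 hb2
             have := hN₁ a; have := hN₂ b; omega)
          | (have h1 := hfA a ha1 ha2; have h2 := hfB b hb1
             have := hN₁ a; have := hN₂ b; omega)
          | (have h1 := hfB a ha1; have h2 := hfS b hb1 hb2
             have := hN₂ a; have := hN₂ b; omega)
          | (have h1 := hfB a ha1; have h2 := hfA b hb1 hb2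
             have := hN₂ a; have := hN₁ b; omega))
      | (exact absurd (hV2of a ha1) ha2)
      | (exact absurd (hV2of b hb1) hb2)
    }
  · -- NoFillOrder H f
    intro p u v hup hvp hpu hpv huv
    by_cases hp1 : p ∈ V₁
    · by_cases hp2 : p ∈ V₂
      · -- p in separator: u, v must also be in the separator
        have hmem : ∀ x : V, f p < f x → x ∈ V₁ ∧ x ∈ V₂ := by
          intro x hx
          have hfp := hfS p hp1 hp2
          by_cases hx1 : x ∈ V₁
          · by_cases hx2 : x ∈ V₂
            · exact ⟨hx1, hx2⟩
            · have := hfA x hx1 hx2; have := hN₁ x; have := hN₂ p; omega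
          · have := hfB x hx1; have := hN₂ x; have := hN₂ p; omega
        obtain ⟨hu1, hu2⟩ := hmem u hpu
        obtain ⟨hv1, hv2⟩ := hmem v hpv
        exact Or.inl (hK₁le u v hu1 hv1 (hcomplete ⟨hu1, hu2⟩ ⟨hv1, hv2⟩ huv))
      · -- p ∈ V₁ \ V₂
        have hEdge : ∀ x : V, H.Adj x p → K₁.Adj x p := by
          intro x hx
          rcases hx with hx | hx
          · exact hx
          · exact absurd ((hK₂supp _ _ hx).2) hp2
        have h1 := hEdge u hup
        have h2 := hEdge v hvp
        have hu1 : u ∈ V₁ := (hK₁supp _ _ h1).1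
        have hv1 : v ∈ V₁ := (hK₁supp _ _ h2).1
        have hgu : g₁ p < g₁ u := by
          by_cases hu2 : u ∈ V₂
          · exact hlast₁ p u hp1 hp2 hu1 hu2
          · have := hfA p hp1 hp2; have := hfA u hu1 hu2; omega
        have hgv : g₁ p < g₁ v := by
          by_cases hv2 : v ∈ V₂
          · exact hlast₁ p v hp1 hp2 hv1 hv2
          · have := hfA p hp1 hp2; have := hfA v hv1 hv2; omega
        exact Or.inl (hg₁rel p u v (Set.mem_toFinset.mpr hp1) (Set.mem_toFinset.mpr hu1)
          (Set.mem_toFinset.mpr hv1) h1 h2 hgu hgv huv)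
    · -- p ∈ V₂ \ V₁
      have hp2 : p ∈ V₂ := hV2of p hp1
      have hEdge : ∀ x : V, H.Adj x p → K₂.Adj x p := by
        intro x hx
        rcases hx with hx | hx
        · exact absurd ((hK₁supp _ _ hx).2) hp1
        · exact hx
      have h1 := hEdge u hup
      have h2 := hEdge v hvp
      have hu2 : u ∈ V₂ := (hK₂supp _ _ h1).1
      have hv2 : v ∈ V₂ := (hK₂supp _ _ h2).1
      have hgu : g₂ p < g₂ u := by
        by_cases hu1 : u ∈ V₁
        · exact hlast₂ p u hp2 hp1 hu1 hu2
        · have := hfB p hp1; have := hfB u hu1; omega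
      have hgv : g₂ p < g₂ v := by
        by_cases hv1 : v ∈ V₁
        · exact hlast₂ p v hp2 hp1 hv1 hv2
        · have := hfB p hp1; have := hfB v hv1; omega
      exact Or.inr (hg₂rel p u v (Set.mem_toFinset.mpr hp2) (Set.mem_toFinset.mpr hu2)
        (Set.mem_toFinset.mpr hv2) h1 h2 hgu hgv huv)
  · -- triangle-freeness of the fill
    intro u v w huv hvw huw
    by_contra hcon
    push_neg at hcon
    obtain ⟨nuv, nvw, nuw⟩ := hcon
    have key : ∀ a b c : V, H.Adj a b → H.Adj b c → H.Adj a c →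
        ¬ G.Adj a b → ¬ G.Adj b c → ¬ G.Adj a c → a ∉ V₂ → False := by
      intro a b c hab hbc hac nab nbc nac ha2
      have hKab : K₁.Adj a b := by
        rcases hab with h | h
        · exact h
        · exact absurd ((hK₂supp _ _ h).1) ha2
      have hKac : K₁.Adj a c := by
        rcases hac with h | h
        · exact h
        · exact absurd ((hK₂supp _ _ h).1) ha2
      have hb1 : b ∈ V₁ := (hK₁supp _ _ hKab).2
      have hc1 : c ∈ V₁ := (hK₁supp _ _ hKac).2
      have hKbc : K₁.Adj b c := by
        rcases hbc with h | h
        · exact h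
        · exact absurd (hcomplete ⟨hb1, (hK₂supp _ _ h).1⟩ ⟨hc1, (hK₂supp _ _ h).2⟩ h.ne) nbc
      rcases hK₁TF a b c hKab hKbc hKac with h | h | h
      · exact nab h
      · exact nbc h
      · exact nac h
    by_cases hu2 : u ∈ V₂
    · by_cases hv2 : v ∈ V₂
      · by_cases hw2 : w ∈ V₂
        · -- all three vertices in V₂ : the triangle lies in K₂
          have conv : ∀ {x y : V}, H.Adj x y → ¬ G.Adj x y → x ∈ V₂ → y ∈ V₂ → K₂.Adj x y := by
            intro x y hxy nxy hx2 hy2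
            rcases hxy with h | h
            · exact absurd
                (hcomplete ⟨(hK₁supp _ _ h).1, hx2⟩ ⟨(hK₁supp _ _ h).2, hy2⟩ h.ne) nxy
            · exact h
          rcases hK₂TF u v w (conv huv nuv hu2 hv2) (conv hvw nvw hv2 hw2)
            (conv huw nuw hu2 hw2) with h | h | h
          · exact nuv h
          · exact nvw h
          · exact nuw h
        · exact key w u v huw.symm huv hvw.symm (fun h => nuw h.symm) nuv
            (fun h => nvw h.symm) hw2
      · exact key v u w huv.symm huw hvw (fun h => nuv h.symm) nuw nvw hv2
    · exact key u v w huv hvw huw nuv nvw nuw hu2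

/-- Clique sum property: if `V = V₁ ∪ V₂` with nonempty complete intersection
separating `V₁ \ V₂` from `V₂ \ V₁`, and the induced subgraphs on `V₁` and `V₂` are Generalized
Bartlett, then so is `G`. -/
theorem isGB_of_cliqueSum [Fintype V] (G : SimpleGraph V) (V₁ V₂ : Set V)
    (hunion : V₁ ∪ V₂ = Set.univ)
    (hinter : (V₁ ∩ V₂).Nonempty)
    (hproper : ((V₁ \ V₂) ∪ (V₂ \ V₁)).Nonempty)
    (hcomplete : G.IsClique (V₁ ∩ V₂))
    (hsep : ∀ u ∈ V₁ \ V₂, ∀ w ∈ V₂ \ V₁, ¬ G.Adj u w)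
    (h₁ : IsGB (G.induce V₁)) (h₂ : IsGB (G.induce V₂)) :
    IsGB G := by
  exact isGB_of_cliqueSum' G V₁ V₂ hunion hcomplete hsep h₁ h₂
end

section
/- (Hereditary property.) If G = (V,E) is a Generalized Bartlett graph and V' ⊆ V, then the induced subgraph G' of G on V' is also a Generalized Bartlett graph. -/
open SimpleGraph

variable {V : Type*}

/-- Rose–Tarjan–Lueker style characterization of the edges of `triSeq σ G k`:
`u` and `v` are adjacent iff `u ≠ v` and there is a walk from `u` to `v` in `G` all of whose
interior vertices have labels `< k`, `< σ u` and `< σ v`. -/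
lemma triSeq_adj_iff {n : ℕ} (σ : V ≃ Fin n) (G : SimpleGraph V) (k : ℕ) (u v : V) :
    (triSeq σ G k).Adj u v ↔ u ≠ v ∧ ∃ p : G.Walk u v,
      ∀ w ∈ p.support, w = u ∨ w = v ∨
        ((σ w : ℕ) < k ∧ (σ w : ℕ) < (σ u : ℕ) ∧ (σ w : ℕ) < (σ v : ℕ)) := by
  classical
  induction k generalizing u v with
  | zero =>
    constructor
    · intro h
      refine ⟨h.ne, h.toWalk, ?_⟩
      intro w hw
      simp only [SimpleGraph.Adj.toWalk, SimpleGraph.Walk.support_cons,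
        SimpleGraph.Walk.support_nil, List.mem_cons, List.mem_singleton] at hw
      have hw' : w = u ∨ w = v := by simpa using (show w ∈ [u, v] from hw)
      rcases hw' with h1 | h1
      · exact Or.inl h1
      · exact Or.inr (Or.inl h1)
    · rintro ⟨hne, p, hp⟩
      cases p with
      | nil => exact absurd rfl hne
      | @cons _ x _ h q =>
        have hx : x ∈ (SimpleGraph.Walk.cons h q).support := by simp
        rcases hp x hx with h1 | h1 | h1
        · exact absurd h1.symm h.ne
        · subst h1; exact h
        · omega
  | succ k ih =>
    constructor
    · rintro (h | ⟨hne, hk, h1, h2, ha, hb⟩)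
      · obtain ⟨hne, p, hp⟩ := (ih u v).mp h
        refine ⟨hne, p, fun w hw => ?_⟩
        rcases hp w hw with h1 | h1 | h1
        · exact Or.inl h1
        · exact Or.inr (Or.inl h1)
        · exact Or.inr (Or.inr ⟨by omega, h1.2.1, h1.2.2⟩)
      · set x := σ.symm ⟨k, hk⟩ with hxdef
        have hσx : (σ x : ℕ) = k := by simp [hxdef]
        obtain ⟨hneu, p1, hp1⟩ := (ih u x).mp ha
        obtain ⟨hnev, p2, hp2⟩ := (ih v x).mp hb
        refine ⟨hne, p1.append p2.reverse, fun w hw => ?_⟩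
        rw [SimpleGraph.Walk.mem_support_append_iff] at hw
        have hwx : w = x → w = u ∨ w = v ∨
            ((σ w : ℕ) < k + 1 ∧ (σ w : ℕ) < (σ u : ℕ) ∧ (σ w : ℕ) < (σ v : ℕ)) := by
          intro hwx; subst hwx
          exact Or.inr (Or.inr ⟨by omega, by omega, by omega⟩)
        rcases hw with hw | hw
        · rcases hp1 w hw with h' | h' | h'
          · exact Or.inl h'
          · exact hwx h'
          · rw [hσx] at h'
            exact Or.inr (Or.inr ⟨by omega, h'.2.1, by omega⟩)
        · rw [SimpleGraph.Walk.support_reverse, List.mem_reverse] at hw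
          rcases hp2 w hw with h' | h' | h'
          · exact Or.inr (Or.inl h')
          · exact hwx h'
          · rw [hσx] at h'
            exact Or.inr (Or.inr ⟨by omega, by omega, h'.2.1⟩)
    · rintro ⟨hne, p, hp⟩
      -- pass to the underlying path
      have hp' : ∀ w ∈ p.bypass.support, w = u ∨ w = v ∨
          ((σ w : ℕ) < k + 1 ∧ (σ w : ℕ) < (σ u : ℕ) ∧ (σ w : ℕ) < (σ v : ℕ)) :=
        fun w hw => hp w (p.support_bypass_subset hw)
      set q := p.bypass with hq
      have hqpath : q.IsPath := p.bypass_isPath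
      by_cases hc : ∀ w ∈ q.support, w = u ∨ w = v ∨
          ((σ w : ℕ) < k ∧ (σ w : ℕ) < (σ u : ℕ) ∧ (σ w : ℕ) < (σ v : ℕ))
      · exact Or.inl ((ih u v).mpr ⟨hne, q, hc⟩)
      · push_neg at hc
        obtain ⟨x, hxmem, hxu, hxv, himp⟩ := hc
        rcases hp' x hxmem with h1 | h1 | h1
        · exact absurd h1 hxu
        · exact absurd h1 hxv
        · have hσxk : (σ x : ℕ) = k := by
            by_cases hlt : (σ x : ℕ) < k
            · have := himp hlt h1.2.1; omega
            · omega
          have hk : k < n := hσxk ▸ (σ x).isLt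
          have hxeq : x = σ.symm ⟨k, hk⟩ := by
            rw [← Equiv.symm_apply_apply σ x]
            congr 1
            exact Fin.ext hσxk
          -- split the path at x
          have hnodup : q.support.Nodup := hqpath.support_nodup
          have hsplit : q.support = (q.takeUntil x hxmem).support
              ++ (q.dropUntil x hxmem).support.tail := by
            conv_lhs => rw [← q.take_spec hxmem]
            exact SimpleGraph.Walk.support_append _ _
          rw [hsplit] at hnodup
          have hdisj := List.disjoint_of_nodup_append hnodup
          have hvnot : v ∉ (q.takeUntil x hxmem).support := by
            intro hv
            have hv2 : v ∈ (q.dropUntil x hxmem).support.tail := by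
              have := (q.dropUntil x hxmem).end_mem_support
              rw [SimpleGraph.Walk.support_eq_cons, List.mem_cons] at this
              rcases this with h' | h'
              · exact absurd h'.symm hxv
              · exact h'
            exact hdisj hv hv2
          have hunot : ∀ w ∈ (q.dropUntil x hxmem).support, w ≠ x → w ≠ u := by
            intro w hw hwx hwu
            rw [hwu] at hw hwx
            have : u ∈ (q.dropUntil x hxmem).support.tail := by
              rw [SimpleGraph.Walk.support_eq_cons, List.mem_cons] at hw
              rcases hw with h' | h'
              · exact absurd h' hwx
              · exact h'
            exact hdisj (q.takeUntil x hxmem).start_mem_support this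
          have hinterior : ∀ w ∈ q.support, w ≠ u → w ≠ v → w ≠ x →
              ((σ w : ℕ) < k ∧ (σ w : ℕ) < (σ u : ℕ) ∧ (σ w : ℕ) < (σ v : ℕ)) := by
            intro w hw hwu hwv hwx
            rcases hp' w hw with h' | h' | h'
            · exact absurd h' hwu
            · exact absurd h' hwv
            · have : (σ w : ℕ) ≠ k := by
                intro h
                exact hwx (σ.injective (Fin.ext (h.trans hσxk.symm)))
              exact ⟨by omega, h'.2.1, h'.2.2⟩
          have hadjux : (triSeq σ G k).Adj u x := by
            refine (ih u x).mpr ⟨fun h => hxu h.symm, q.takeUntil x hxmem, fun w hw => ?_⟩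
            by_cases hwu : w = u
            · exact Or.inl hwu
            by_cases hwx : w = x
            · exact Or.inr (Or.inl hwx)
            have hwq : w ∈ q.support := q.support_takeUntil_subset hxmem hw
            have hwv : w ≠ v := fun h => hvnot (h ▸ hw)
            obtain ⟨c1, c2, c3⟩ := hinterior w hwq hwu hwv hwx
            exact Or.inr (Or.inr ⟨c1, c2, by omega⟩)
          have hadjvx : (triSeq σ G k).Adj v x := by
            refine (ih v x).mpr ⟨fun h => hxv h.symm, (q.dropUntil x hxmem).reverse,
              fun w hw => ?_⟩
            rw [SimpleGraph.Walk.support_reverse, List.mem_reverse] at hw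
            by_cases hwv : w = v
            · exact Or.inl hwv
            by_cases hwx : w = x
            · exact Or.inr (Or.inl hwx)
            have hwu : w ≠ u := hunot w hw hwx
            have hwq : w ∈ q.support := q.support_dropUntil_subset hxmem hw
            obtain ⟨c1, c2, c3⟩ := hinterior w hwq hwu hwv hwx
            exact Or.inr (Or.inr ⟨c1, c3, by omega⟩)
          exact Or.inr ⟨hne, hk, by omega, by omega, hxeq ▸ hadjux, hxeq ▸ hadjvx⟩

/-- Hereditary property: any induced subgraph of a Generalized Bartlett graph is
Generalized Bartlett. -/
theorem isGB_induce_of_isGB [Fintype V] (G : SimpleGraph V) (hGB : IsGB G)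
    (V' : Set V) : IsGB (G.induce V') := by
  classical
  obtain ⟨n, σ, hσ⟩ := hGB
  -- the set of labels of vertices in V'
  set s : Finset (Fin n) := Finset.univ.filter (fun j => (σ.symm j : V) ∈ V') with hs
  set m : ℕ := s.card with hm
  have hmem : ∀ v : V', σ (v : V) ∈ s := by
    intro v
    simp only [hs, Finset.mem_filter, Finset.mem_univ, true_and, Equiv.symm_apply_apply]
    exact v.2
  -- the induced ordering on V'
  let e1 : V' ≃ s := {
    toFun := fun v => ⟨σ (v : V), hmem v⟩
    invFun := fun j => ⟨σ.symm (j : Fin n), by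
      have := j.2
      simp only [hs, Finset.mem_filter, Finset.mem_univ, true_and] at this
      exact this⟩
    left_inv := fun v => by simp
    right_inv := fun j => by simp }
  let e2 : Fin m ≃o s := s.orderIsoOfFin rfl
  let σ' : V' ≃ Fin m := e1.trans e2.symm.toEquiv
  have hmono : ∀ a b : V', ((σ' a : ℕ) < (σ' b : ℕ)) ↔ ((σ (a : V) : ℕ) < (σ (b : V) : ℕ)) := by
    intro a b
    have : σ' a < σ' b ↔ e1 a < e1 b := by
      constructor
      · intro h
        have := e2.strictMono h
        simpa [σ', e1] using this
      · intro h
        have : e2.symm (e1 a) < e2.symm (e1 b) := e2.symm.strictMono h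
        simpa [σ'] using this
    rw [← Fin.lt_def, this]
    simp only [e1, Equiv.coe_fn_mk, Subtype.mk_lt_mk, Fin.lt_def]
  refine ⟨m, σ', ?_⟩
  rintro ⟨u, v, w, huv, hvw, huw, tuv, tvw, tuw⟩
  -- transfer triangulation adjacency from the induced graph to G
  have key : ∀ a b : V', (triangulation σ' (G.induce V')).Adj a b →
      (triangulation σ G).Adj (a : V) (b : V) := by
    intro a b hab
    rw [triangulation, triSeq_adj_iff] at hab
    obtain ⟨hne, p, hp⟩ := hab
    rw [triangulation, triSeq_adj_iff]
    have hne' : (a : V) ≠ (b : V) := fun h => hne (Subtype.ext h)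
    refine ⟨hne', p.map (SimpleGraph.Embedding.induce V').toHom, ?_⟩
    intro x hx
    erw [SimpleGraph.Walk.support_map, List.mem_map] at hx
    obtain ⟨y, hy, rfl⟩ := hx
    have hcoe : ((SimpleGraph.Embedding.induce (G := G) V').toHom y : V) = (y : V) := rfl
    rw [hcoe]
    rcases hp y hy with h1 | h1 | h1
    · exact Or.inl (by rw [h1])
    · exact Or.inr (Or.inl (by rw [h1]))
    · have c2 : (σ (y : V) : ℕ) < (σ (a : V) : ℕ) := (hmono y a).mp h1.2.1
      have c3 : (σ (y : V) : ℕ) < (σ (b : V) : ℕ) := (hmono y b).mp h1.2.2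
      have hab' : (σ (a : V) : ℕ) ≠ (σ (b : V) : ℕ) := by
        intro h
        exact hne' (σ.injective (Fin.ext h))
      have ha : (σ (a : V) : ℕ) < n := (σ (a : V)).isLt
      have hb : (σ (b : V) : ℕ) < n := (σ (b : V)).isLt
      refine Or.inr (Or.inr ⟨by omega, c2, c3⟩)
  have huv' : ¬ G.Adj (u : V) (v : V) := huv
  have hvw' : ¬ G.Adj (v : V) (w : V) := hvw
  have huw' : ¬ G.Adj (u : V) (w : V) := huw
  exact hσ ⟨u, v, w, huv', hvw', huw', key u v tuv, key v w tvw, key u w tuw⟩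
end

section
/- (Lemma on grids.) For every n ≥ 2, the n×3 grid graph — the graph with vertex set {1,…,n} × {1,…,3} in which (a,b) and (a',b') are adjacent if and only if |a−a'| + |b−b'| = 1 — ordered row by row (vertex (a,b) receives label 3(a−1)+b), is a Generalized Bartlett graph, and this row-wise ordering is a GB ordering. -/
open SimpleGraph

variable {V : Type*}

private lemma triSeq_dist_le {n m : ℕ} {V : Type*} (σ : V ≃ Fin m) (G : SimpleGraph V)
    (hbase : ∀ u v : V, G.Adj u v → Nat.dist (σ u : ℕ) (σ v : ℕ) ≤ 3) :
    ∀ u v : V, (triSeq σ G n).Adj u v → Nat.dist (σ u : ℕ) (σ v : ℕ) ≤ 3 := by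
  induction n with
  | zero => exact hbase
  | succ k ih =>
    intro u v h
    rcases h with h | ⟨hne, hk, h1, h2, h3, h4⟩
    · exact ih u v h
    · have d1 := ih u _ h3
      have d2 := ih v _ h4
      rw [Equiv.apply_symm_apply] at d1 d2
      simp only [Nat.dist] at d1 d2 ⊢
      omega

set_option maxHeartbeats 1000000 in
/-- Lemma on grids: for `n ≥ 2`, the `n × 3` grid graph, ordered row by row
(vertex `(a,b)` getting label `3(a−1)+b`, i.e. 0-based label `3a+b`), is a Generalized
Bartlett graph and the row-wise ordering is a GB ordering. -/
theorem isGB_grid_n_by_3 (n : ℕ) (hn : 2 ≤ n) (G : SimpleGraph (Fin n × Fin 3))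
    (hG : ∀ u v : Fin n × Fin 3, G.Adj u v ↔
      Nat.dist (u.1 : ℕ) (v.1 : ℕ) + Nat.dist (u.2 : ℕ) (v.2 : ℕ) = 1) :
    (∀ σ : (Fin n × Fin 3) ≃ Fin (n * 3),
        (∀ u : Fin n × Fin 3, (σ u : ℕ) = 3 * (u.1 : ℕ) + (u.2 : ℕ)) →
        IsGBOrdering σ G) ∧
      IsGB G := by
  -- Every vertex's 0-based label under a row-wise ordering is 3a+b.
  have key : ∀ σ : (Fin n × Fin 3) ≃ Fin (n * 3),
      (∀ u : Fin n × Fin 3, (σ u : ℕ) = 3 * (u.1 : ℕ) + (u.2 : ℕ)) → IsGBOrdering σ G := by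
    intro σ hσ
    rintro ⟨u, v, w, huv, hvw, huw, tuv, tvw, tuw⟩
    -- distance bound on the triangulation
    have hbase : ∀ a b : Fin n × Fin 3, G.Adj a b → Nat.dist (σ a : ℕ) (σ b : ℕ) ≤ 3 := by
      intro a b hab
      rw [hG] at hab
      have h2a : (a.2 : ℕ) < 3 := a.2.isLt
      have h2b : (b.2 : ℕ) < 3 := b.2.isLt
      rw [hσ a, hσ b]
      simp only [Nat.dist] at hab ⊢
      omega
    have bnd := triSeq_dist_le (n := n * 3 - 2) σ G hbase
    have duv := bnd u v tuv
    have dvw := bnd v w tvw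
    have duw := bnd u w tuw
    have nuv : u ≠ v := tuv.ne
    have nvw : v ≠ w := tvw.ne
    have nuw : u ≠ w := tuw.ne
    have xuv : (σ u : ℕ) ≠ (σ v : ℕ) := fun h => nuv (σ.injective (Fin.ext h))
    have xvw : (σ v : ℕ) ≠ (σ w : ℕ) := fun h => nvw (σ.injective (Fin.ext h))
    have xuw : (σ u : ℕ) ≠ (σ w : ℕ) := fun h => nuw (σ.injective (Fin.ext h))
    rw [hG] at huv hvw huw
    have h2u : (u.2 : ℕ) < 3 := u.2.isLt
    have h2v : (v.2 : ℕ) < 3 := v.2.isLt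
    have h2w : (w.2 : ℕ) < 3 := w.2.isLt
    have eu := hσ u; have ev := hσ v; have ew := hσ w
    simp only [Nat.dist] at duv dvw duw huv hvw huw
    clear tuv tvw tuw bnd hbase hG hσ nuv nvw nuw
    omega
  refine ⟨key, ?_⟩
  refine ⟨n * 3, (finProdFinEquiv : Fin n × Fin 3 ≃ Fin (n * 3)), key _ ?_⟩
  intro u
  show ((u.2 : ℕ) + 3 * (u.1 : ℕ)) = 3 * (u.1 : ℕ) + (u.2 : ℕ)
  omega
end
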